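/- Let E be a real inner product space and v ∈ E a unit vector. Define F : E → E by F(w) = (‖w‖² + 4)⁻¹ • (4w + (‖w‖² − 4)v) (the inverse of stereographic projection from the pole v, taking values in the unit sphere). Then F is conformal on the hyperplane orthogonal to v: for every w orthogonal to v and every u orthogonal to v, the Fréchet derivative satisfies ‖DF(w)(u)‖ = (4/(‖w‖² + 4)) ‖u‖. -/

import Mathlib

set_option maxHeartbeats 1000000


open scoped RealInnerProductSpace

/-- The inverse of stereographic projection from the pole `v`:
`F(w) = (‖w‖² + 4)⁻¹ • (4w + (‖w‖² − 4)v)`, mapping the hyperplane orthogonal to `v`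
to the unit sphere. -/
noncomputable def stereoInv {E : Type*} [NormedAddCommGroup E]
    [InnerProductSpace ℝ E] (v : E) (w : E) : E :=
  (‖w‖ ^ 2 + 4)⁻¹ • ((4 : ℝ) • w + (‖w‖ ^ 2 - 4) • v)

/-- The inverse of stereographic projection is conformal on the hyperplane orthogonal
to the pole: for `w ⊥ v` and `u ⊥ v` its Fréchet derivative satisfies
`‖DF(w)(u)‖ = (4/(‖w‖² + 4))‖u‖`. This conformal factor expresses the round metric of
the sphere in the stereographic chart. -/
theorem stereoInv_conformal {E : Type*} [NormedAddCommGroup E]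
    [InnerProductSpace ℝ E] (v : E) (hv : ‖v‖ = 1) (w u : E)
    (hw : ⟪w, v⟫ = 0) (hu : ⟪u, v⟫ = 0) :
    ‖fderiv ℝ (stereoInv v) w u‖ = (4 / (‖w‖ ^ 2 + 4)) * ‖u‖ := by
  have hN : (‖w‖ ^ 2 + 4 : ℝ) ≠ 0 := by positivity
  -- derivative of `‖·‖²`
  have h1 : HasFDerivAt (fun x : E => ‖x‖ ^ 2) (2 • (innerSL ℝ w)) w := by
    simpa using (hasFDerivAt_id w).norm_sq
  have h2 : HasFDerivAt (fun x : E => ‖x‖ ^ 2 + 4) (2 • (innerSL ℝ w)) w :=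
    h1.add_const 4
  -- derivative of the scalar factor
  have hc : HasFDerivAt (fun x : E => (‖x‖ ^ 2 + 4)⁻¹)
      ((-((‖w‖ ^ 2 + 4) ^ 2)⁻¹) • (2 • (innerSL ℝ w))) w := by
    have := (hasDerivAt_inv hN).comp_hasFDerivAt w h2
    simpa [Function.comp_def] using this
  -- derivative of the vector factor
  have hg : HasFDerivAt (fun x : E => (4 : ℝ) • x + (‖x‖ ^ 2 - 4) • v)
      ((4 : ℝ) • ContinuousLinearMap.id ℝ E + (2 • (innerSL ℝ w)).smulRight v) w := by
    have hsc : HasFDerivAt (fun x : E => (‖x‖ ^ 2 - 4 : ℝ)) (2 • (innerSL ℝ w)) w :=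
      h1.sub_const 4
    have h4 : HasFDerivAt (fun x : E => (4 : ℝ) • x) ((4 : ℝ) • ContinuousLinearMap.id ℝ E) w :=
      (hasFDerivAt_id w).const_smul (4 : ℝ)
    have hv2 := hsc.smul (hasFDerivAt_const v w)
    have h5 := h4.add hv2
    simp at h5
    exact h5
  have hF : HasFDerivAt (stereoInv v)
      ((‖w‖ ^ 2 + 4)⁻¹ • ((4 : ℝ) • ContinuousLinearMap.id ℝ E + (2 • (innerSL ℝ w)).smulRight v)
        + ((-((‖w‖ ^ 2 + 4) ^ 2)⁻¹) • (2 • (innerSL ℝ w))).smulRight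
          ((4 : ℝ) • w + (‖w‖ ^ 2 - 4) • v)) w := hc.smul hg
  rw [hF.fderiv]
  -- evaluate the derivative at `u`
  set N : ℝ := ‖w‖ ^ 2 + 4 with hNdef
  set a : ℝ := ⟪w, u⟫ with ha
  have heval : ((N)⁻¹ • ((4 : ℝ) • ContinuousLinearMap.id ℝ E + (2 • (innerSL ℝ w)).smulRight v)
        + ((-(N ^ 2)⁻¹) • (2 • (innerSL ℝ w))).smulRight
          ((4 : ℝ) • w + (‖w‖ ^ 2 - 4) • v)) u
      = (N⁻¹ * 4) • u + (N⁻¹ * (2 * a)) • v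
        + ((-(N ^ 2)⁻¹ * (2 * a)) * 4) • w + ((-(N ^ 2)⁻¹ * (2 * a)) * (‖w‖ ^ 2 - 4)) • v := by
    simp only [ContinuousLinearMap.add_apply, ContinuousLinearMap.coe_smul', Pi.smul_apply,
      ContinuousLinearMap.smulRight_apply, ContinuousLinearMap.id_apply, innerSL_apply_apply,
      smul_smul, smul_eq_mul]
    module
  rw [heval]
  -- compute the squared norm
  have hvv : ⟪v, v⟫ = (1 : ℝ) := by
    rw [real_inner_self_eq_norm_sq, hv]; norm_num
  set X : E := (N⁻¹ * 4) • u + (N⁻¹ * (2 * a)) • v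
        + ((-(N ^ 2)⁻¹ * (2 * a)) * 4) • w + ((-(N ^ 2)⁻¹ * (2 * a)) * (‖w‖ ^ 2 - 4)) • v with hX
  have key : ‖X‖ ^ 2 = (4 / N * ‖u‖) ^ 2 := by
    have hXX : ‖X‖ ^ 2 = ⟪X, X⟫ := (real_inner_self_eq_norm_sq X).symm
    rw [hXX, hX]
    have hwu : ⟪u, w⟫ = a := (real_inner_comm u w).symm
    have hvw : ⟪v, w⟫ = 0 := by rw [real_inner_comm]; exact hw
    have hvu : ⟪v, u⟫ = 0 := by rw [real_inner_comm]; exact hu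
    have huu : ⟪u, u⟫ = ‖u‖ ^ 2 := real_inner_self_eq_norm_sq u
    have hww : ⟪w, w⟫ = ‖w‖ ^ 2 := real_inner_self_eq_norm_sq w
    simp only [inner_add_left, inner_add_right, real_inner_smul_left,
      real_inner_smul_right, hwu, hvw, hvu, hw, hu, hvv, huu, hww, ← ha]
    have hNn : N ^ 2 ≠ 0 := pow_ne_zero 2 hN
    field_simp
    ring_nf
    rw [hNdef]; ring
  have h4N : (0 : ℝ) ≤ 4 / N * ‖u‖ := by
    apply mul_nonneg _ (norm_nonneg u)
    positivity
  have := congrArg Real.sqrt key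
  rwa [Real.sqrt_sq (norm_nonneg _), Real.sqrt_sq h4N] at this
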